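/- For any n ≥ 1 and any integers ℓ_1, …, ℓ_n with ℓ_i ≥ m for all i, the length of the cylinder interval I_n(ℓ_1,…,ℓ_n) satisfies θ/((1+θ²)·Q_n²) ≤ |I_n(ℓ_1,…,ℓ_n)| ≤ θ/Q_n², where Q_n = Q_n(ℓ_1,…,ℓ_n). -/

import Mathlib

open Filter Real

noncomputable section

/-- The generalized Gauss map `T_θ`. -/
def gaussMap (θ : ℝ) (x : ℝ) : ℝ := if x = 0 then 0 else 1 / x - θ * ⌊1 / (θ * x)⌋

/-- The `n`-th digit (1-indexed) of the θ-expansion of `x`: `ℓ_n(x) = ⌊1/(θ·T_θ^{n−1}(x))⌋`. -/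
def digit (θ : ℝ) (x : ℝ) (n : ℕ) : ℤ := ⌊1 / (θ * (gaussMap θ)^[n - 1] x)⌋

/-- `S_{n,θ}(x)`, the sum of the first `n` digits. -/
def Sdig (θ : ℝ) (x : ℝ) (n : ℕ) : ℤ := ∑ k ∈ Finset.Icc 1 n, digit θ x k

/-- `L_{n,θ}(x)`, the maximum of the first `n` digits. -/
def Ldig (θ : ℝ) (x : ℝ) (n : ℕ) : ℤ :=
  if h : 1 ≤ n then (Finset.Icc 1 n).sup' (Finset.nonempty_Icc.mpr h) (digit θ x) else 0

/-- The ratio `L_{n,θ}(x)·log n·log log n / (S_{n,θ}(x) − L_{n,θ}(x))`. -/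
def ratioFun (θ : ℝ) (x : ℝ) (n : ℕ) : ℝ :=
  ((Ldig θ x n : ℝ) * Real.log n * Real.log (Real.log n)) /
    ((Sdig θ x n : ℝ) - (Ldig θ x n : ℝ))

/-- The level set `E_θ(α)` of irrationals in `[0,θ]` where the ratio tends to `α`. -/
def Eset (θ α : ℝ) : Set ℝ :=
  {x | x ∈ Set.Icc 0 θ ∧ Irrational x ∧
    Tendsto (fun n => ratioFun θ x n) atTop (nhds α)}

/-- The denominators `Q_k` of the θ-expansion convergents:
`Q_0 = 1`, `Q_1 = ℓ_1·θ` (from `Q_{-1} = 0`), `Q_k = ℓ_k·θ·Q_{k-1} + Q_{k-2}`. -/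
def Qden (θ : ℝ) (ℓ : ℕ → ℤ) : ℕ → ℝ
  | 0 => 1
  | 1 => (ℓ 1 : ℝ) * θ
  | (n + 2) => (ℓ (n + 2) : ℝ) * θ * Qden θ ℓ (n + 1) + Qden θ ℓ n

/-- The cylinder `I_n(ℓ_1,…,ℓ_n)`: irrationals in `[0,θ]` whose first `n` digits
are `ℓ_1, …, ℓ_n`. -/
def cylinder (θ : ℝ) (n : ℕ) (ℓ : ℕ → ℤ) : Set ℝ :=
  {x | x ∈ Set.Icc 0 θ ∧ Irrational x ∧ ∀ i : ℕ, 1 ≤ i → i ≤ n → digit θ x i = ℓ i}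

namespace CylAux

/-- shift of digit sequences -/
def sh (ℓ : ℕ → ℤ) : ℕ → ℤ := fun i => ℓ (i + 1)

def Pden (θ : ℝ) (ℓ : ℕ → ℤ) : ℕ → ℝ
  | 0 => 0
  | 1 => 1
  | (n + 2) => (ℓ (n + 2) : ℝ) * θ * Pden θ ℓ (n + 1) + Pden θ ℓ n

def hmap (θ : ℝ) : ℕ → (ℕ → ℤ) → ℝ → ℝ
  | 0, _, t => t
  | (n + 1), ℓ, t => 1 / ((ℓ 1 : ℝ) * θ + hmap θ n (sh ℓ) t)

variable {θ : ℝ} {m : ℕ} {ℓ ℓ' : ℕ → ℤ}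

lemma Qden_congr : ∀ n, (∀ i, 1 ≤ i → i ≤ n → ℓ i = ℓ' i) → Qden θ ℓ n = Qden θ ℓ' n
  | 0, _ => rfl
  | 1, h => by simp [Qden, h 1 le_rfl le_rfl]
  | (n + 2), h => by
      rw [Qden, Qden, h (n+2) (by omega) le_rfl,
        Qden_congr (n+1) (fun i h1 h2 => h i h1 (by omega)),
        Qden_congr n (fun i h1 h2 => h i h1 (by omega))]

lemma one_le_cast (hm : 0 < m) (h : (m : ℤ) ≤ ℓ 1) : (1 : ℝ) ≤ (ℓ 1 : ℝ) := by
  have : (1 : ℤ) ≤ ℓ 1 := le_trans (by exact_mod_cast hm) h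
  exact_mod_cast this

lemma Qden_pos (hθ0 : 0 < θ) (hℓ : ∀ i, 1 ≤ i → (1 : ℤ) ≤ ℓ i) :
    ∀ n, 0 < Qden θ ℓ n
  | 0 => one_pos
  | 1 => by
      have : (1 : ℝ) ≤ (ℓ 1 : ℝ) := by exact_mod_cast hℓ 1 le_rfl
      rw [Qden]; nlinarith
  | (n + 2) => by
      have h1 := Qden_pos hθ0 hℓ (n + 1)
      have h2 := Qden_pos hθ0 hℓ n
      have h3 : (0 : ℝ) < (ℓ (n + 2) : ℝ) := by
        exact_mod_cast lt_of_lt_of_le one_pos (hℓ (n + 2) (by omega))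
      rw [Qden]
      exact add_pos (mul_pos (mul_pos h3 hθ0) h1) h2

lemma Pden_nonneg (hθ0 : 0 < θ) (hℓ : ∀ i, 1 ≤ i → (1 : ℤ) ≤ ℓ i) :
    ∀ n, 0 ≤ Pden θ ℓ n
  | 0 => le_rfl
  | 1 => zero_le_one
  | (n + 2) => by
      have h1 := Pden_nonneg hθ0 hℓ (n + 1)
      have h2 := Pden_nonneg hθ0 hℓ n
      have h3 : (0 : ℝ) ≤ (ℓ (n + 2) : ℝ) := by
        have := hℓ (n + 2) (by omega)
        exact_mod_cast le_trans zero_le_one this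
      rw [Pden]
      exact add_nonneg (mul_nonneg (mul_nonneg h3 hθ0.le) h1) h2

/-- `Q_n ≤ θ Q_{n+1}` when all digits are `≥ m` and `θ² = 1/m`. -/
lemma Qden_le (hθ0 : 0 < θ) (hθm : (m : ℝ) * θ * θ = 1)
    (hℓ : ∀ i, 1 ≤ i → (m : ℤ) ≤ ℓ i) (hm : 0 < m) :
    ∀ n, Qden θ ℓ n ≤ θ * Qden θ ℓ (n + 1)
  | 0 => by
      have h1 : (m : ℝ) ≤ (ℓ 1 : ℝ) := by exact_mod_cast hℓ 1 le_rfl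
      rw [Qden, Qden]
      have h4 : 0 ≤ ((ℓ 1 : ℝ) - m) * θ * θ :=
        mul_nonneg (mul_nonneg (sub_nonneg.mpr h1) hθ0.le) hθ0.le
      nlinarith [hθm, h4]
  | (n + 1) => by
      have h1 : (m : ℝ) ≤ (ℓ (n + 2) : ℝ) := by exact_mod_cast hℓ (n + 2) (by omega)
      have hℓ1 : ∀ i, 1 ≤ i → (1 : ℤ) ≤ ℓ i := fun i hi =>
        le_trans (by exact_mod_cast hm) (hℓ i hi)
      have h2 := Qden_pos hθ0 hℓ1 (n + 1)
      have h3 := Qden_pos hθ0 hℓ1 n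
      rw [show n + 1 + 1 = n + 2 from rfl, Qden]
      have h4 : 0 ≤ ((ℓ (n + 2) : ℝ) - m) * θ * θ * Qden θ ℓ (n + 1) :=
        mul_nonneg (mul_nonneg (mul_nonneg (sub_nonneg.mpr h1) hθ0.le) hθ0.le) h2.le
      have e : (m : ℝ) * θ * θ * Qden θ ℓ (n + 1) = Qden θ ℓ (n + 1) := by
        rw [hθm, one_mul]
      nlinarith [h4, e, mul_nonneg hθ0.le h3.le]

lemma PQ_shift (θ : ℝ) (ℓ : ℕ → ℤ) : ∀ n : ℕ,
    Pden θ ℓ (n + 1) = Qden θ (sh ℓ) n ∧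
      Qden θ ℓ (n + 1) = (ℓ 1 : ℝ) * θ * Qden θ (sh ℓ) n + Pden θ (sh ℓ) n
  | 0 => by simp [Pden, Qden]
  | 1 => by
      constructor
      · show (ℓ 2 : ℝ) * θ * Pden θ ℓ 1 + Pden θ ℓ 0 = (sh ℓ 1 : ℝ) * θ
        simp [Pden, sh]
      · show (ℓ 2 : ℝ) * θ * Qden θ ℓ 1 + Qden θ ℓ 0 =
          (ℓ 1 : ℝ) * θ * Qden θ (sh ℓ) 1 + Pden θ (sh ℓ) 1
        simp [Pden, Qden, sh]; ring
  | (n + 2) => by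
      obtain ⟨ih1p, ih1q⟩ := PQ_shift θ ℓ (n + 1)
      obtain ⟨ih2p, ih2q⟩ := PQ_shift θ ℓ n
      have hsh : (sh ℓ (n + 2) : ℝ) = (ℓ (n + 3) : ℝ) := rfl
      constructor
      · show (ℓ (n + 3) : ℝ) * θ * Pden θ ℓ (n + 2) + Pden θ ℓ (n + 1) =
          Qden θ (sh ℓ) (n + 2)
        rw [ih1p, ih2p, Qden, hsh]
      · show (ℓ (n + 3) : ℝ) * θ * Qden θ ℓ (n + 2) + Qden θ ℓ (n + 1) =
          (ℓ 1 : ℝ) * θ * Qden θ (sh ℓ) (n + 2) + Pden θ (sh ℓ) (n + 2)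
        rw [ih1q, ih2q, Qden, Pden, hsh]; ring

lemma det_eq (θ : ℝ) (ℓ : ℕ → ℤ) : ∀ n : ℕ,
    Pden θ ℓ (n + 1) * Qden θ ℓ n - Pden θ ℓ n * Qden θ ℓ (n + 1) = (-1 : ℝ) ^ n
  | 0 => by simp [Pden, Qden]
  | (n + 1) => by
      have ih := det_eq θ ℓ n
      show Pden θ ℓ (n + 2) * Qden θ ℓ (n + 1) -
        Pden θ ℓ (n + 1) * Qden θ ℓ (n + 2) = (-1 : ℝ) ^ (n + 1)
      rw [Pden, Qden, pow_succ]
      nlinarith [ih]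

lemma hmap_nonneg (hθ0 : 0 < θ) (hm : 0 < m) :
    ∀ (n : ℕ) (ℓ : ℕ → ℤ), (∀ i, 1 ≤ i → (m : ℤ) ≤ ℓ i) → ∀ t, 0 ≤ t →
      0 ≤ hmap θ n ℓ t
  | 0, _, _, t, ht => ht
  | (n + 1), ℓ, hℓ, t, ht => by
      have hs := hmap_nonneg hθ0 hm n (sh ℓ) (fun i hi => hℓ (i + 1) (by omega)) t ht
      have h1 : (1 : ℝ) ≤ (ℓ 1 : ℝ) := one_le_cast hm (hℓ 1 le_rfl)
      rw [hmap]
      positivity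

lemma hmap_mem (hθ0 : 0 < θ) (hθm : (m : ℝ) * θ * θ = 1) (hm : 0 < m) :
    ∀ (n : ℕ) (ℓ : ℕ → ℤ), (∀ i, 1 ≤ i → (m : ℤ) ≤ ℓ i) → ∀ t, t ∈ Set.Ioo 0 θ →
      hmap θ n ℓ t ∈ Set.Ioo 0 θ
  | 0, _, _, t, ht => ht
  | (n + 1), ℓ, hℓ, t, ht => by
      obtain ⟨hs0, hsθ⟩ := hmap_mem hθ0 hθm hm n (sh ℓ)
        (fun i hi => hℓ (i + 1) (by omega)) t ht
      set s := hmap θ n (sh ℓ) t with hs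
      have h1 : (m : ℝ) ≤ (ℓ 1 : ℝ) := by exact_mod_cast hℓ 1 le_rfl
      have hm0 : (0 : ℝ) < m := by exact_mod_cast hm
      have hm0' : (1 : ℝ) ≤ (m : ℝ) := by exact_mod_cast hm
      have hden : 0 < (ℓ 1 : ℝ) * θ + s := by nlinarith
      constructor
      · rw [hmap]; positivity
      · rw [hmap, div_lt_iff₀ hden]
        have h4 : 0 ≤ ((ℓ 1 : ℝ) - m) * θ * θ :=
          mul_nonneg (mul_nonneg (sub_nonneg.mpr h1) hθ0.le) hθ0.le
        nlinarith [hθm, h4, mul_pos hs0 hθ0]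

lemma hmap_eq (hθ0 : 0 < θ) (hm : 0 < m) :
    ∀ (n : ℕ) (ℓ : ℕ → ℤ), (∀ i, 1 ≤ i → (m : ℤ) ≤ ℓ i) → ∀ t, 0 ≤ t →
      hmap θ (n + 1) ℓ t =
        (Pden θ ℓ (n + 1) + t * Pden θ ℓ n) / (Qden θ ℓ (n + 1) + t * Qden θ ℓ n)
  | 0, ℓ, hℓ, t, ht => by
      simp [hmap, Pden, Qden, sh]
  | (n + 1), ℓ, hℓ, t, ht => by
      have hℓsh : ∀ i, 1 ≤ i → (m : ℤ) ≤ sh ℓ i := fun i hi => hℓ (i + 1) (by omega)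
      have ih := hmap_eq hθ0 hm n (sh ℓ) hℓsh t ht
      have hℓ1 : ∀ i, 1 ≤ i → (1 : ℤ) ≤ sh ℓ i := fun i hi =>
        le_trans (by exact_mod_cast hm) (hℓsh i hi)
      have hQ1 := Qden_pos hθ0 hℓ1 (n + 1)
      have hQ0 := Qden_pos hθ0 hℓ1 n
      have hP1 := Pden_nonneg hθ0 hℓ1 (n + 1)
      have hP0 := Pden_nonneg hθ0 hℓ1 n
      have h1 : (1 : ℝ) ≤ (ℓ 1 : ℝ) := one_le_cast hm (hℓ 1 le_rfl)
      set A := Pden θ (sh ℓ) (n + 1)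
      set B := Pden θ (sh ℓ) n
      set C := Qden θ (sh ℓ) (n + 1)
      set D := Qden θ (sh ℓ) n
      have hCD : 0 < C + t * D := by positivity
      have key : hmap θ (n + 2) ℓ t =
          (C + t * D) / ((ℓ 1 : ℝ) * θ * (C + t * D) + (A + t * B)) := by
        show 1 / ((ℓ 1 : ℝ) * θ + hmap θ (n + 1) (sh ℓ) t) = _
        rw [ih]
        have e1 : (ℓ 1 : ℝ) * θ + (A + t * B) / (C + t * D) =
            ((ℓ 1 : ℝ) * θ * (C + t * D) + (A + t * B)) / (C + t * D) := by
          field_simp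
        rw [e1, one_div_div]
      rw [key]
      obtain ⟨s1p, s1q⟩ := PQ_shift θ ℓ (n + 1)
      obtain ⟨s2p, s2q⟩ := PQ_shift θ ℓ n
      rw [show n + 1 + 1 = n + 2 from rfl, s1p, s2p, s1q, s2q]
      have hden2 : 0 < (ℓ 1 : ℝ) * θ * (C + t * D) + (A + t * B) := by
        have : 0 < (ℓ 1 : ℝ) * θ := by nlinarith
        nlinarith [mul_nonneg ht hP0]
      have hden3 : (0:ℝ) < (ℓ 1 : ℝ) * θ * C + A + t * ((ℓ 1 : ℝ) * θ * D + B) := by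
        have : 0 < (ℓ 1 : ℝ) * θ := by nlinarith
        nlinarith [mul_nonneg ht hP0, mul_nonneg ht hQ0.le]
      rw [div_eq_div_iff hden2.ne' hden3.ne']
      ring


lemma hmap_sub (hθ0 : 0 < θ) (hm : 0 < m) (n : ℕ) (ℓ : ℕ → ℤ)
    (hℓ : ∀ i, 1 ≤ i → (m : ℤ) ≤ ℓ i) {t s : ℝ} (ht : 0 ≤ t) (hs : 0 ≤ s) :
    hmap θ (n + 1) ℓ t - hmap θ (n + 1) ℓ s =
      (s - t) * (-1 : ℝ) ^ n /
        ((Qden θ ℓ (n + 1) + t * Qden θ ℓ n) * (Qden θ ℓ (n + 1) + s * Qden θ ℓ n)) := by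
  have hℓ1 : ∀ i, 1 ≤ i → (1 : ℤ) ≤ ℓ i := fun i hi =>
    le_trans (by exact_mod_cast hm) (hℓ i hi)
  have hQ1 := Qden_pos hθ0 hℓ1 (n + 1)
  have hQ0 := Qden_pos hθ0 hℓ1 n
  have hDt : 0 < Qden θ ℓ (n + 1) + t * Qden θ ℓ n := by nlinarith [mul_nonneg ht hQ0.le]
  have hDs : 0 < Qden θ ℓ (n + 1) + s * Qden θ ℓ n := by nlinarith [mul_nonneg hs hQ0.le]
  rw [hmap_eq hθ0 hm n ℓ hℓ t ht, hmap_eq hθ0 hm n ℓ hℓ s hs,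
    div_sub_div _ _ hDt.ne' hDs.ne']
  congr 1
  have hd := det_eq θ ℓ n
  linear_combination (s - t) * hd

lemma digit_succ (θ x : ℝ) (j : ℕ) : digit θ x (j + 1) = ⌊1 / (θ * (gaussMap θ)^[j] x)⌋ := rfl

lemma digit_shift (θ x : ℝ) (j : ℕ) :
    digit θ (gaussMap θ x) (j + 1) = digit θ x (j + 2) := by
  rw [digit_succ, digit_succ, Function.iterate_succ_apply]

lemma gaussMap_mem (hθ0 : 0 < θ) {x : ℝ} (hx0 : x ≠ 0) :
    gaussMap θ x ∈ Set.Ico 0 θ := by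
  have hkey : gaussMap θ x = θ * Int.fract (1 / (θ * x)) := by
    rw [gaussMap, if_neg hx0, Int.fract]
    field_simp
  rw [hkey]
  constructor
  · exact mul_nonneg hθ0.le (Int.fract_nonneg _)
  · calc θ * Int.fract (1 / (θ * x)) < θ * 1 :=
        (mul_lt_mul_iff_right₀ hθ0).mpr (Int.fract_lt_one _)
    _ = θ := mul_one θ

lemma fwd (hθ0 : 0 < θ) : ∀ (n : ℕ) (ℓ : ℕ → ℤ) (x : ℝ), x ∈ Set.Icc 0 θ →
    (∀ k, k < n → (gaussMap θ)^[k] x ≠ 0) →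
    (∀ i, 1 ≤ i → i ≤ n → digit θ x i = ℓ i) →
    (gaussMap θ)^[n] x ∈ Set.Icc 0 θ ∧ x = hmap θ n ℓ ((gaussMap θ)^[n] x)
  | 0, ℓ, x, hx, _, _ => ⟨hx, rfl⟩
  | (n + 1), ℓ, x, hx, hne, hdig => by
      have hx0 : x ≠ 0 := by
        have := hne 0 (by omega); rwa [Function.iterate_zero_apply] at this
      have hy := gaussMap_mem hθ0 hx0
      set y := gaussMap θ x with hydef
      have hyIcc : y ∈ Set.Icc 0 θ := ⟨hy.1, hy.2.le⟩
      obtain ⟨hmem, heq⟩ := fwd hθ0 n (sh ℓ) y hyIcc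
        (fun k hk => by
          rw [hydef, ← Function.iterate_succ_apply]
          exact hne (k + 1) (by omega))
        (fun i hi1 hi2 => by
          obtain ⟨j, rfl⟩ : ∃ j, i = j + 1 := ⟨i - 1, by omega⟩
          rw [hydef, digit_shift]
          exact hdig (j + 2) (by omega) (by omega))
      rw [Function.iterate_succ_apply]
      refine ⟨hmem, ?_⟩
      have hL1 : (ℓ 1 : ℝ) = ⌊1 / (θ * x)⌋ := by
        have := hdig 1 le_rfl (by omega)
        rw [← this, digit_succ, Function.iterate_zero_apply]
      have hsum : (ℓ 1 : ℝ) * θ + y = 1 / x := by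
        rw [hydef, gaussMap, if_neg hx0, hL1]
        ring
      show x = 1 / ((ℓ 1 : ℝ) * θ + hmap θ n (sh ℓ) ((gaussMap θ)^[n] y))
      rw [← heq, hsum, one_div_one_div]

lemma bwd (hθ0 : 0 < θ) (hθm : (m : ℝ) * θ * θ = 1) (hm : 0 < m) :
    ∀ (n : ℕ) (ℓ : ℕ → ℤ), (∀ i, 1 ≤ i → (m : ℤ) ≤ ℓ i) →
    ∀ t, t ∈ Set.Ioo 0 θ →
      (gaussMap θ)^[n] (hmap θ n ℓ t) = t ∧
        ∀ i, 1 ≤ i → i ≤ n → digit θ (hmap θ n ℓ t) i = ℓ i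
  | 0, ℓ, hℓ, t, ht => ⟨rfl, fun i hi1 hi2 => absurd (hi1.trans hi2) (by omega)⟩
  | (n + 1), ℓ, hℓ, t, ht => by
      have hℓsh : ∀ i, 1 ≤ i → (m : ℤ) ≤ sh ℓ i := fun i hi => hℓ (i + 1) (by omega)
      obtain ⟨hit, hdig⟩ := bwd hθ0 hθm hm n (sh ℓ) hℓsh t ht
      have hsmem := hmap_mem hθ0 hθm hm n (sh ℓ) hℓsh t ht
      set s := hmap θ n (sh ℓ) t with hsdef
      have h1 : (m : ℝ) ≤ (ℓ 1 : ℝ) := by exact_mod_cast hℓ 1 le_rfl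
      have hm0 : (0 : ℝ) < m := by exact_mod_cast hm
      have hden : 0 < (ℓ 1 : ℝ) * θ + s := by nlinarith [hsmem.1]
      have hh : hmap θ (n + 1) ℓ t = 1 / ((ℓ 1 : ℝ) * θ + s) := rfl
      have hhpos : 0 < hmap θ (n + 1) ℓ t := by rw [hh]; positivity
      have hinv : 1 / (θ * hmap θ (n + 1) ℓ t) = s / θ + (ℓ 1 : ℝ) := by
        rw [hh]
        field_simp
        ring
      have hfloor : ⌊1 / (θ * hmap θ (n + 1) ℓ t)⌋ = ℓ 1 := by
        rw [hinv, Int.floor_add_intCast, Int.floor_eq_zero_iff.mpr, zero_add]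
        constructor
        · exact div_nonneg hsmem.1.le hθ0.le
        · exact (div_lt_one hθ0).mpr hsmem.2
      have hT : gaussMap θ (hmap θ (n + 1) ℓ t) = s := by
        rw [gaussMap, if_neg hhpos.ne', hfloor, hh, one_div_one_div]
        ring
      constructor
      · rw [Function.iterate_succ_apply, hT, hsdef, hit]
      · intro i hi1 hi2
        obtain ⟨j, rfl⟩ : ∃ j, i = j + 1 := ⟨i - 1, by omega⟩
        cases j with
        | zero => rw [digit_succ, Function.iterate_zero_apply, hfloor]
        | succ j =>
            rw [← digit_shift, hT]
            exact hdig (j + 1) (by omega) (by omega)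


lemma exists_good (hθ0 : 0 < θ) (hm : 0 < m) (n : ℕ) (ℓ : ℕ → ℤ)
    (hℓ : ∀ i, 1 ≤ i → (m : ℤ) ≤ ℓ i) {a b : ℝ} (hab : a < b) (ha : 0 ≤ a) :
    ∃ t ∈ Set.Ioo a b, Irrational t ∧ Irrational (hmap θ (n + 1) ℓ t) := by
  set f := hmap θ (n + 1) ℓ with hfdef
  have hℓ1 : ∀ i, 1 ≤ i → (1 : ℤ) ≤ ℓ i := fun i hi =>
    le_trans (by exact_mod_cast hm) (hℓ i hi)
  have hQ1 := Qden_pos hθ0 hℓ1 (n + 1)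
  have hQ0 := Qden_pos hθ0 hℓ1 n
  have hinj : Set.InjOn f (Set.Ioo a b) := by
    intro t ht s hs hfe
    have h0t : (0:ℝ) ≤ t := le_trans ha ht.1.le
    have h0s : (0:ℝ) ≤ s := le_trans ha hs.1.le
    have hsub := hmap_sub hθ0 hm n ℓ hℓ h0t h0s
    have hfe' : hmap θ (n + 1) ℓ t = hmap θ (n + 1) ℓ s := hfe
    rw [hfe', sub_self] at hsub
    have hDt : 0 < Qden θ ℓ (n + 1) + t * Qden θ ℓ n := by
      nlinarith [mul_nonneg h0t hQ0.le]
    have hDs : 0 < Qden θ ℓ (n + 1) + s * Qden θ ℓ n := by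
      nlinarith [mul_nonneg h0s hQ0.le]
    have hD : ((Qden θ ℓ (n + 1) + t * Qden θ ℓ n) *
        (Qden θ ℓ (n + 1) + s * Qden θ ℓ n)) ≠ 0 := (mul_pos hDt hDs).ne'
    field_simp at hsub
    have h0 : (s - t) * (-1 : ℝ) ^ n = 0 := by rw [← hsub]; ring
    rcases mul_eq_zero.mp h0 with h | h
    · linarith
    · exact absurd h (pow_ne_zero _ (by norm_num))
  have c1 : {t ∈ Set.Ioo a b | ¬ Irrational t}.Countable := by
    apply Set.Countable.mono _ (Set.countable_range ((↑) : ℚ → ℝ))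
    rintro t ⟨_, h⟩
    rwa [Irrational, not_not] at h
  have c2 : {t ∈ Set.Ioo a b | ¬ Irrational (f t)}.Countable := by
    refine Set.MapsTo.countable_of_injOn (t := Set.range ((↑) : ℚ → ℝ)) ?_
      (hinj.mono (fun x hx => hx.1)) (Set.countable_range _)
    rintro t ⟨_, h⟩
    rwa [Irrational, not_not] at h
  have hunc : ¬ (Set.Ioo a b).Countable := by
    intro h
    have h2 := h.le_aleph0
    rw [Cardinal.mk_Ioo_real hab] at h2
    exact absurd h2 (not_le.mpr Cardinal.aleph0_lt_continuum)
  have hns : ¬ (Set.Ioo a b ⊆ {t ∈ Set.Ioo a b | ¬ Irrational t} ∪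
      {t ∈ Set.Ioo a b | ¬ Irrational (f t)}) :=
    fun hsub => hunc ((c1.union c2).mono hsub)
  obtain ⟨t, ht, hbad⟩ := Set.not_subset.mp hns
  exact ⟨t, ht, of_not_not fun hc => hbad (Or.inl ⟨ht, hc⟩),
    of_not_not fun hc => hbad (Or.inr ⟨ht, hc⟩)⟩

end CylAux

set_option maxHeartbeats 1000000 in
/-- `θ/((1+θ²)·Q_n²) ≤ |I_n(ℓ_1,…,ℓ_n)| ≤ θ/Q_n²`. -/
theorem cylinder_length_bounds (θ : ℝ) (m : ℕ) (hm : 0 < m) (hmns : ¬ IsSquare m)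
    (hθ : θ ∈ Set.Ioo (0 : ℝ) 1) (hθirr : Irrational θ) (hθ2 : θ ^ 2 = 1 / m)
    (n : ℕ) (hn : 1 ≤ n) (ℓ : ℕ → ℤ) (hℓ : ∀ i : ℕ, 1 ≤ i → i ≤ n → (m : ℤ) ≤ ℓ i) :
    θ / ((1 + θ ^ 2) * (Qden θ ℓ n) ^ 2) ≤ Metric.diam (cylinder θ n ℓ) ∧
      Metric.diam (cylinder θ n ℓ) ≤ θ / (Qden θ ℓ n) ^ 2 := by
  obtain ⟨hθ0, hθ1⟩ := hθ
  have hm0 : (0 : ℝ) < m := by exact_mod_cast hm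
  have hθm : (m : ℝ) * θ * θ = 1 := by
    have h2 : θ ^ 2 * m = 1 := by rw [hθ2]; field_simp
    nlinarith [h2]
  set ℓ' : ℕ → ℤ := fun i => max (ℓ i) m with hℓ'def
  have hℓ'm : ∀ i, 1 ≤ i → (m : ℤ) ≤ ℓ' i := fun i _ => le_max_right _ _
  have hℓ'1 : ∀ i, 1 ≤ i → (1 : ℤ) ≤ ℓ' i := fun i hi =>
    le_trans (by exact_mod_cast hm) (hℓ'm i hi)
  have hagree : ∀ i, 1 ≤ i → i ≤ n → ℓ i = ℓ' i := fun i h1 h2 =>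
    (max_eq_left (hℓ i h1 h2)).symm
  have hQeq : Qden θ ℓ n = Qden θ ℓ' n := CylAux.Qden_congr n hagree
  have hcyl : cylinder θ n ℓ = cylinder θ n ℓ' := by
    unfold cylinder
    ext x
    simp only [Set.mem_setOf_eq]
    constructor
    · rintro ⟨a, b, c⟩
      exact ⟨a, b, fun i h1 h2 => (c i h1 h2).trans (hagree i h1 h2)⟩
    · rintro ⟨a, b, c⟩
      exact ⟨a, b, fun i h1 h2 => (c i h1 h2).trans (hagree i h1 h2).symm⟩
  rw [hQeq, hcyl]
  obtain ⟨k, rfl⟩ : ∃ k, n = k + 1 := ⟨n - 1, by omega⟩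
  set Q := Qden θ ℓ' (k + 1) with hQdef
  set Q0 := Qden θ ℓ' k with hQ0def
  have hQ : 0 < Q := CylAux.Qden_pos hθ0 hℓ'1 (k + 1)
  have hQ0 : 0 < Q0 := CylAux.Qden_pos hθ0 hℓ'1 k
  have hQle : Q0 ≤ θ * Q := CylAux.Qden_le hθ0 hθm hℓ'm hm k
  have habs1 : |(-1 : ℝ) ^ k| = 1 := by
    rw [abs_pow, abs_neg, abs_one, one_pow]
  constructor
  · -- lower bound
    have hbd : Bornology.IsBounded (cylinder θ (k + 1) ℓ') :=
      (Metric.isBounded_Icc (0:ℝ) θ).subset (fun x hx => hx.1)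
    have hclos : ∀ u, u ∈ Set.Icc 0 θ →
        CylAux.hmap θ (k + 1) ℓ' u ∈ closure (cylinder θ (k + 1) ℓ') := by
      intro u hu
      rw [Metric.mem_closure_iff]
      intro ε hε
      set δ := ε * (Q * Q) with hδdef
      have hδ0 : 0 < δ := by positivity
      set a := max (u - δ) 0 with hadef
      set b := min (u + δ) θ with hbdef
      have hab : a < b := lt_min (max_lt (by linarith) (by linarith [hu.1]))
        (max_lt (by linarith [hu.2]) hθ0)
      have ha0 : (0:ℝ) ≤ a := le_max_right _ _
      obtain ⟨t, htio, htirr, hfirr⟩ := CylAux.exists_good hθ0 hm k ℓ' hℓ'm hab ha0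
      have htθ : t ∈ Set.Ioo 0 θ :=
        ⟨ha0.trans_lt htio.1, htio.2.trans_le (min_le_right _ _)⟩
      obtain ⟨hTt, hdigt⟩ := CylAux.bwd hθ0 hθm hm (k + 1) ℓ' hℓ'm t htθ
      have hmem := CylAux.hmap_mem hθ0 hθm hm (k + 1) ℓ' hℓ'm t htθ
      refine ⟨CylAux.hmap θ (k + 1) ℓ' t, ⟨⟨hmem.1.le, hmem.2.le⟩, hfirr, hdigt⟩, ?_⟩
      have hsub := CylAux.hmap_sub hθ0 hm k ℓ' hℓ'm hu.1 htθ.1.le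
      have hDu : 0 < Q + u * Q0 := by nlinarith [mul_nonneg hu.1 hQ0.le]
      have hDt : 0 < Q + t * Q0 := by nlinarith [mul_nonneg htθ.1.le hQ0.le]
      have htu : |t - u| < δ := by
        rw [abs_lt]
        constructor
        · have := le_max_left (u - δ) 0
          linarith [htio.1]
        · have := min_le_left (u + δ) θ
          linarith [htio.2]
      rw [Real.dist_eq, hsub, abs_div, abs_mul, habs1, mul_one,
        abs_of_pos (mul_pos hDu hDt)]
      calc |t - u| / ((Q + u * Q0) * (Q + t * Q0)) ≤ |t - u| / (Q * Q) := by
            apply div_le_div₀ (abs_nonneg _) le_rfl (by positivity)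
            nlinarith [mul_nonneg hu.1 hQ0.le, mul_nonneg htθ.1.le hQ0.le,
              mul_nonneg (mul_nonneg hu.1 hQ0.le) (mul_nonneg htθ.1.le hQ0.le)]
        _ < δ / (Q * Q) := (div_lt_div_iff_of_pos_right (by positivity)).mpr htu
        _ ≤ ε := by
            rw [hδdef, mul_div_assoc, div_self (by positivity : Q * Q ≠ 0), mul_one]
    have h0mem := hclos 0 ⟨le_rfl, hθ0.le⟩
    have hθmem := hclos θ ⟨hθ0.le, le_rfl⟩
    have hdist := Metric.dist_le_diam_of_mem hbd.closure h0mem hθmem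
    rw [Metric.diam_closure] at hdist
    refine le_trans ?_ hdist
    have hsub := CylAux.hmap_sub hθ0 hm k ℓ' hℓ'm (le_refl (0:ℝ)) hθ0.le
    have hDθ : 0 < Q + θ * Q0 := by nlinarith [mul_nonneg hθ0.le hQ0.le]
    have hD0 : 0 < Q + 0 * Q0 := by nlinarith
    rw [Real.dist_eq, hsub, abs_div, abs_mul, habs1, mul_one,
      abs_of_pos (mul_pos hD0 hDθ), abs_of_pos (by linarith : (0:ℝ) < θ - 0)]
    have hcomp : (Q + 0 * Q0) * (Q + θ * Q0) ≤ (1 + θ ^ 2) * Q ^ 2 := by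
      have h3 : θ * Q0 ≤ θ * (θ * Q) := mul_le_mul_of_nonneg_left hQle hθ0.le
      nlinarith [hQ, h3]
    apply div_le_div₀ (by linarith) (by linarith) (by positivity) hcomp
  · -- upper bound
    apply Metric.diam_le_of_forall_dist_le (by positivity)
    intro x hx y hy
    obtain ⟨hxI, hxirr, hxd⟩ := hx
    obtain ⟨hyI, hyirr, hyd⟩ := hy
    have hne : ∀ z : ℝ, (∀ i, 1 ≤ i → i ≤ k + 1 → digit θ z i = ℓ' i) →
        ∀ j, j < k + 1 → (gaussMap θ)^[j] z ≠ 0 := by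
      intro z hzd j hj hz0
      have hd0 : digit θ z (j + 1) = 0 := by
        rw [CylAux.digit_succ, hz0, mul_zero, div_zero, Int.floor_zero]
      have h2 := hzd (j + 1) (by omega) (by omega)
      have h3 := hℓ'1 (j + 1) (by omega)
      omega
    obtain ⟨hxt, hxe⟩ := CylAux.fwd hθ0 (k + 1) ℓ' x hxI (hne x hxd) hxd
    obtain ⟨hyt, hye⟩ := CylAux.fwd hθ0 (k + 1) ℓ' y hyI (hne y hyd) hyd
    set tx := (gaussMap θ)^[k + 1] x with htxdef
    set ty := (gaussMap θ)^[k + 1] y with htydef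
    have hsub := CylAux.hmap_sub hθ0 hm k ℓ' hℓ'm hxt.1 hyt.1
    have hDx : 0 < Q + tx * Q0 := by nlinarith [mul_nonneg hxt.1 hQ0.le]
    have hDy : 0 < Q + ty * Q0 := by nlinarith [mul_nonneg hyt.1 hQ0.le]
    rw [Real.dist_eq, hxe, hye, hsub, abs_div, abs_mul, habs1, mul_one,
      abs_of_pos (mul_pos hDx hDy)]
    have hnum : |ty - tx| ≤ θ := by
      rw [abs_sub_le_iff]
      constructor <;> linarith [hxt.1, hxt.2, hyt.1, hyt.2]
    have hQQ : Q * Q ≤ (Q + tx * Q0) * (Q + ty * Q0) := by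
      nlinarith [mul_nonneg hxt.1 hQ0.le, mul_nonneg hyt.1 hQ0.le,
        mul_nonneg (mul_nonneg hxt.1 hQ0.le) (mul_nonneg hyt.1 hQ0.le)]
    calc |ty - tx| / ((Q + tx * Q0) * (Q + ty * Q0)) ≤ θ / (Q * Q) :=
          div_le_div₀ hθ0.le hnum (by positivity) hQQ
      _ = θ / Q ^ 2 := by rw [sq]
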